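/- Let X be a Tychonoff (completely regular Hausdorff) space and let P ⊆ X be a nonempty compact perfect set (P is closed in X and has no isolated points in its subspace topology). Then the function φ : C_k(X) → ℝ defined by φ(f) = max_{x∈P} f(x) is convex and continuous on C_k(X), and φ is Fréchet differentiable at no point of C_k(X). -/

import Mathlib

open Set

section Aux

variable {X : Type*} [TopologicalSpace X]

private theorem stmt15_bdd (P : Set X) (hPcomp : IsCompact P) (f : C(X,ℝ)) :
    BddAbove (f '' P) :=
  (hPcomp.image f.continuous).bddAbove

private theorem stmt15_conv (P : Set X) (hPne : P.Nonempty) (hPcomp : IsCompact P) :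
    ConvexOn ℝ Set.univ (fun f : C(X, ℝ) => sSup (f '' P)) := by
  refine ⟨convex_univ, fun f _ g _ a b ha hb hab => ?_⟩
  refine csSup_le (hPne.image _) ?_
  rintro - ⟨x, hx, rfl⟩
  have h1 : f x ≤ sSup (f '' P) := le_csSup (stmt15_bdd P hPcomp f) ⟨x, hx, rfl⟩
  have h2 : g x ≤ sSup (g '' P) := le_csSup (stmt15_bdd P hPcomp g) ⟨x, hx, rfl⟩
  have : (a • f + b • g) x = a * f x + b * g x := by simp
  rw [this]
  simp only [smul_eq_mul]
  gcongr

private theorem stmt15_cont (P : Set X) (hPne : P.Nonempty) (hPcomp : IsCompact P) :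
    Continuous (fun f : C(X, ℝ) => sSup (f '' P)) := by
  haveI : CompactSpace P := isCompact_iff_compactSpace.mp hPcomp
  haveI : Nonempty P := hPne.to_subtype
  have key : ∀ f : C(X,ℝ), f '' P = Set.range (f.restrict P) := by
    intro f; rw [Set.image_eq_range]; rfl
  have hψ : LipschitzWith 1 (fun h : C(P, ℝ) => sSup (Set.range h)) := by
    apply LipschitzWith.of_le_add
    intro h₁ h₂
    have hb : ∀ h : C(P,ℝ), BddAbove (Set.range h) := fun h =>
      (isCompact_range h.continuous).bddAbove
    refine csSup_le (range_nonempty _) ?_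
    rintro - ⟨x, rfl⟩
    have : h₁ x ≤ h₂ x + dist h₁ h₂ := by
      have hd := ContinuousMap.dist_apply_le_dist (f := h₁) (g := h₂) x
      rw [Real.dist_eq] at hd
      have := (abs_le.mp hd).2
      linarith
    calc h₁ x ≤ h₂ x + dist h₁ h₂ := this
      _ ≤ sSup (Set.range h₂) + dist h₁ h₂ := by
          gcongr; exact le_csSup (hb h₂) ⟨x, rfl⟩
  have : (fun f : C(X, ℝ) => sSup (f '' P)) =
      (fun h : C(P, ℝ) => sSup (Set.range h)) ∘ (ContinuousMap.restrict P) := by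
    funext f; exact congrArg sSup (key f)
  rw [this]
  exact hψ.continuous.comp (ContinuousMap.continuous_restrict P)

/-- Every neighbourhood of `0` in `C_k(X)` contains all functions that are
uniformly small on some compact set. -/
private theorem stmt15_nhds {V : Set C(X,ℝ)} (hV : V ∈ nhds (0 : C(X,ℝ))) :
    ∃ (K : Set X) (ε : ℝ), 0 < ε ∧ ∀ g : C(X,ℝ), (∀ x ∈ K, |g x| < ε) → g ∈ V := by
  have hb := (nhds_basis_uniformity'
    (ContinuousMap.hasBasis_compactConvergenceUniformity (α := X) (β := ℝ))).mem_iff.mp hV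
  obtain ⟨⟨K, W⟩, ⟨hK, hW⟩, hsub⟩ := hb
  obtain ⟨ε, hε, hεW⟩ := Metric.mem_uniformity_dist.mp hW
  refine ⟨K, ε, hε, fun g hg => hsub fun x hx => hεW ?_⟩
  simpa [Real.dist_eq] using hg x hx

end Aux

/-- Fréchet differentiability of `φ` at a point `z` of a topological vector space:
`φ` is continuous at `z` and there are a continuous linear functional `ξ` and a
neighbourhood `V` of `0` such that `sup_{h∈V} (φ(z+th) − φ(z) − tξ(h)) = o(t)` as
`t → 0`.  (Since `0 ∈ V`, the supremum is nonnegative, so the `o(t)` condition is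
exactly the pointwise upper estimate below.) -/
def FrechetDiffAt {Z : Type*} [AddCommGroup Z] [Module ℝ Z] [TopologicalSpace Z]
    (φ : Z → ℝ) (z : Z) : Prop :=
  ContinuousAt φ z ∧ ∃ ξ : Z →L[ℝ] ℝ, ∃ V ∈ nhds (0 : Z),
    ∀ ε > (0 : ℝ), ∃ δ > (0 : ℝ), ∀ t : ℝ, |t| < δ →
      ∀ h ∈ V, φ (z + t • h) - φ z - t * ξ h ≤ ε * |t|

private theorem stmt15_nondiff {X : Type*} [TopologicalSpace X] [T35Space X]
    (P : Set X) (hPne : P.Nonempty) (hPcomp : IsCompact P)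
    (hPperfect : ∀ a ∈ P, ¬ ∃ U : Set X, IsOpen U ∧ U ∩ P = {a}) :
    ∀ f : C(X, ℝ), ¬ FrechetDiffAt (fun g : C(X, ℝ) => sSup (g '' P)) f := by
  intro f hF
  obtain ⟨-, ξ, V, hV, hest⟩ := hF
  obtain ⟨K, ε₀, hε₀, hKV⟩ := stmt15_nhds hV
  set M := sSup (⇑f '' P) with hM
  have hbdd : ∀ g : C(X,ℝ), BddAbove (⇑g '' P) := fun g => (hPcomp.image g.continuous).bddAbove
  obtain ⟨x₀, hx₀P, hx₀max⟩ := hPcomp.exists_isMaxOn hPne f.continuous.continuousOn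
  have hfx₀ : f x₀ = M :=
    le_antisymm (le_csSup (hbdd f) ⟨x₀, hx₀P, rfl⟩)
      (csSup_le (hPne.image _) (by rintro - ⟨x, hx, rfl⟩; exact hx₀max hx))
  obtain ⟨δ, hδ, hδest⟩ := hest (ε₀ / 16) (by positivity)
  set t : ℝ := min (δ / 2) 1 with htdef
  have ht : 0 < t := lt_min (by linarith) one_pos
  have habs : |t| = t := abs_of_pos ht
  have htδ : |t| < δ := by rw [habs]; exact (min_le_left _ _).trans_lt (by linarith)
  -- find y ∈ P, y ≠ x₀, f y > M - t * ε₀ / 4 (using perfectness of P)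
  have hWopen : IsOpen {x | M - t * ε₀ / 4 < f x} := isOpen_lt continuous_const f.continuous
  have hx₀W : x₀ ∈ {x | M - t * ε₀ / 4 < f x} := by
    simp only [mem_setOf_eq, hfx₀]; nlinarith
  obtain ⟨y, hyW, hyP, hyx₀⟩ : ∃ y, (M - t * ε₀ / 4 < f y) ∧ y ∈ P ∧ y ≠ x₀ := by
    by_contra hcon
    push_neg at hcon
    refine hPperfect x₀ hx₀P ⟨{x | M - t * ε₀ / 4 < f x}, hWopen, ?_⟩
    apply Subset.antisymm
    · rintro z ⟨hz1, hz2⟩; exact hcon z hz1 hz2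
    · rintro z rfl; exact ⟨hx₀W, hx₀P⟩
  -- a separating bump function (complete regularity)
  obtain ⟨u, hu_cont, hu0, hu1⟩ :=
    CompletelyRegularSpace.completely_regular x₀ ({y} : Set X) isClosed_singleton
      (by simp [hyx₀.symm])
  set g : C(X, ℝ) := ⟨fun x => ε₀ / 2 * (1 - (u x : ℝ)),
    continuous_const.mul (continuous_const.sub (continuous_subtype_val.comp hu_cont))⟩ with hg
  have hgx : ∀ x, 0 ≤ g x ∧ g x ≤ ε₀ / 2 := by
    intro x
    have h1 := (u x).2.1
    have h2 := (u x).2.2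
    constructor <;> · simp only [hg, ContinuousMap.coe_mk]; nlinarith
  have hgV : g ∈ V := by
    refine hKV g fun x _ => ?_
    rw [abs_of_nonneg (hgx x).1]
    linarith [(hgx x).2]
  have hgx₀ : g x₀ = ε₀ / 2 := by simp [hg, hu0]
  have hgy : g y = 0 := by
    have : u y = 1 := hu1 rfl
    simp [hg, this]
  -- the two Fréchet estimates, at `t` and `-t`
  have hplus := hδest t htδ g hgV
  have hminus := hδest (-t) (by rwa [abs_neg]) g hgV
  rw [habs] at hplus
  rw [abs_neg, habs] at hminus
  -- lower bounds for the sup at the perturbed functions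
  have lb1 : M + t * (ε₀ / 2) ≤ sSup (⇑(f + t • g) '' P) := by
    have : (f + t • g) x₀ = M + t * (ε₀ / 2) := by
      simp [ContinuousMap.add_apply, hfx₀, hgx₀, smul_eq_mul]
    rw [← this]
    exact le_csSup (hbdd _) ⟨x₀, hx₀P, rfl⟩
  have lb2 : f y ≤ sSup (⇑(f + (-t) • g) '' P) := by
    have : (f + (-t) • g) y = f y := by
      simp [ContinuousMap.add_apply, hgy, smul_eq_mul]
    rw [← this]
    exact le_csSup (hbdd _) ⟨y, hyP, rfl⟩
  simp only at hplus hminus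
  nlinarith [hyW, lb1, lb2, hplus, hminus, ht, hε₀]

/-- Let `X` be Tychonoff and `P ⊆ X` a nonempty compact perfect set
(closed in `X`, with no isolated points in its subspace topology). Then
`φ(f) = max_{x∈P} f(x)` (here realised as `sSup (f '' P)`) is convex and continuous
on `C_k(X)`, and `φ` is Fréchet differentiable at no point of `C_k(X)`. -/
theorem stmt15 {X : Type*} [TopologicalSpace X] [T35Space X]
    (P : Set X) (hPne : P.Nonempty) (hPcomp : IsCompact P) (hPclosed : IsClosed P)
    (hPperfect : ∀ a ∈ P, ¬ ∃ U : Set X, IsOpen U ∧ U ∩ P = {a}) :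
    ConvexOn ℝ Set.univ (fun f : C(X, ℝ) => sSup (f '' P)) ∧
    Continuous (fun f : C(X, ℝ) => sSup (f '' P)) ∧
    ∀ f : C(X, ℝ), ¬ FrechetDiffAt (fun g : C(X, ℝ) => sSup (g '' P)) f :=
  ⟨stmt15_conv P hPne hPcomp, stmt15_cont P hPne hPcomp,
    stmt15_nondiff P hPne hPcomp hPperfect⟩
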